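/- There exist constants C₁, C₂ > 0 such that for all x₁, x₂ ∈ [0,1], C₁|x₁ - x₂| ≤ (1/π²) ∑_{n=1}^{∞} (1/n²)(cos(π n x₁) - cos(π n x₂))² ≤ C₂|x₁ - x₂|. -/

import Mathlib

open Real

lemma hs_cos {x : ℝ} (hx : x ∈ Set.Icc (0:ℝ) 1) :
    HasSum (fun n : ℕ => 1 / ((n:ℝ)+1) ^ 2 * Real.cos (2 * π * ((n:ℝ)+1) * x))
      (π^2 * (x^2 - x + 1/6)) := by
  have h := hasSum_one_div_nat_pow_mul_cos (k := 1) one_ne_zero hx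
  have hb : (Polynomial.map (algebraMap ℚ ℝ) (Polynomial.bernoulli 2)).eval x
      = x^2 - x + 1/6 := by
    have hb2 : bernoulli 2 = 1/6 := by
      rw [bernoulli_eq_bernoulli'_of_ne_one (by norm_num), bernoulli'_two]
    simp [Polynomial.bernoulli, Finset.sum_range_succ, bernoulli_zero, bernoulli_one, hb2]
    ring
  have h' : HasSum (fun n : ℕ => 1 / (n: ℝ) ^ (2*1) * Real.cos (2 * π * n * x))
      (π^2 * (x^2 - x + 1/6)) := by
    have he : ((-1 : ℝ)) ^ (1 + 1) * (2 * π) ^ (2 * 1) / 2 / (2 * 1).factorial *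
        (Polynomial.map (algebraMap ℚ ℝ) (Polynomial.bernoulli (2*1))).eval x
        = π^2 * (x^2 - x + 1/6) := by
      have hf : (((2*1 : ℕ)).factorial : ℝ) = 2 := by norm_num [Nat.factorial]
      rw [show 2*1 = 2 from rfl] at hf ⊢
      rw [hb, hf]
      ring
    rw [← he]; exact h
  have h2 := (hasSum_nat_add_iff' 1).mpr h'
  simp only [Finset.sum_range_one, Nat.cast_zero] at h2
  norm_num at h2
  convert h2 using 2 with n
  · rfl
  · ring

lemma hs_main {x₁ x₂ : ℝ} (h1 : x₁ ∈ Set.Icc (0:ℝ) 1) (h2 : x₂ ∈ Set.Icc (0:ℝ) 1) :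
    HasSum (fun n : ℕ => (1 / ((n:ℝ) + 1) ^ 2) *
        (Real.cos (π * ((n:ℝ) + 1) * x₁) - Real.cos (π * ((n:ℝ) + 1) * x₂)) ^ 2)
      (π^2 * |x₁ - x₂| / 2) := by
  obtain ⟨h1a, h1b⟩ := h1
  obtain ⟨h2a, h2b⟩ := h2
  set d := |x₁ - x₂| with hd
  have hd0 : 0 ≤ d := abs_nonneg _
  have hd1 : d ≤ 1 := by rw [hd, abs_sub_le_iff]; constructor <;> linarith
  have hz := hs_cos (x := 0) (by norm_num)
  have ha := hs_cos (x := x₁) ⟨h1a, h1b⟩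
  have hb := hs_cos (x := x₂) ⟨h2a, h2b⟩
  have hc := hs_cos (x := (x₁ + x₂)/2) ⟨by linarith, by linarith⟩
  have he := hs_cos (x := d/2) ⟨by linarith, by linarith⟩
  have H := (hz.add ((ha.add hb).div_const 2)).sub (hc.add he)
  have hfun : ∀ n : ℕ, ((fun n : ℕ => 1 / ((n:ℝ)+1) ^ 2 * Real.cos (2 * π * ((n:ℝ)+1) * 0)) n +
      ((fun n : ℕ => 1 / ((n:ℝ)+1) ^ 2 * Real.cos (2 * π * ((n:ℝ)+1) * x₁)) n +
       (fun n : ℕ => 1 / ((n:ℝ)+1) ^ 2 * Real.cos (2 * π * ((n:ℝ)+1) * x₂)) n) / 2) -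
      ((fun n : ℕ => 1 / ((n:ℝ)+1) ^ 2 * Real.cos (2 * π * ((n:ℝ)+1) * ((x₁+x₂)/2))) n +
       (fun n : ℕ => 1 / ((n:ℝ)+1) ^ 2 * Real.cos (2 * π * ((n:ℝ)+1) * (d/2))) n)
      = (1 / ((n:ℝ) + 1) ^ 2) *
        (Real.cos (π * ((n:ℝ) + 1) * x₁) - Real.cos (π * ((n:ℝ) + 1) * x₂)) ^ 2 := by
    intro n
    simp only
    set A := π * ((n:ℝ)+1) * x₁ with hA
    set B := π * ((n:ℝ)+1) * x₂ with hB
    have e1 : 2 * π * ((n:ℝ)+1) * x₁ = 2 * A := by rw [hA]; ring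
    have e2 : 2 * π * ((n:ℝ)+1) * x₂ = 2 * B := by rw [hB]; ring
    have e3 : 2 * π * ((n:ℝ)+1) * ((x₁+x₂)/2) = A + B := by rw [hA, hB]; ring
    have e4 : Real.cos (2 * π * ((n:ℝ)+1) * (d/2)) = Real.cos (A - B) := by
      have : 2 * π * ((n:ℝ)+1) * (d/2) = |A - B| := by
        rw [hd, hA, hB, show π * ((n:ℝ)+1) * x₁ - π * ((n:ℝ)+1) * x₂
          = π * ((n:ℝ)+1) * (x₁ - x₂) by ring, abs_mul,
          abs_of_nonneg (by positivity : (0:ℝ) ≤ π * ((n:ℝ)+1))]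
        ring
      rw [this, Real.cos_abs]
    rw [e1, e2, e3, e4, Real.cos_two_mul, Real.cos_two_mul, Real.cos_add, Real.cos_sub]
    norm_num
    ring
  have hval : π^2 * (0^2 - 0 + 1/6) + (π^2 * (x₁^2 - x₁ + 1/6) + π^2 * (x₂^2 - x₂ + 1/6)) / 2 -
      (π^2 * (((x₁+x₂)/2)^2 - (x₁+x₂)/2 + 1/6) + π^2 * ((d/2)^2 - d/2 + 1/6))
      = π^2 * d / 2 := by
    have hd2 : d^2 = (x₁ - x₂)^2 := sq_abs _
    linear_combination (-(1:ℝ)/4) * π^2 * hd2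
  rw [hval] at H
  exact H.congr_fun fun n => (hfun n).symm

theorem variance_comparable_to_distance :
    ∃ C₁ C₂ : ℝ, 0 < C₁ ∧ 0 < C₂ ∧
      ∀ x₁ x₂ : ℝ, x₁ ∈ Set.Icc (0:ℝ) 1 → x₂ ∈ Set.Icc (0:ℝ) 1 →
        C₁ * |x₁ - x₂| ≤
          (1 / π ^ 2) * ∑' n : ℕ, (1 / ((n:ℝ) + 1) ^ 2) *
            (Real.cos (π * ((n:ℝ) + 1) * x₁) - Real.cos (π * ((n:ℝ) + 1) * x₂)) ^ 2 ∧
        (1 / π ^ 2) * ∑' n : ℕ, (1 / ((n:ℝ) + 1) ^ 2) *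
            (Real.cos (π * ((n:ℝ) + 1) * x₁) - Real.cos (π * ((n:ℝ) + 1) * x₂)) ^ 2 ≤
          C₂ * |x₁ - x₂| := by
  refine ⟨1/2, 1/2, by norm_num, by norm_num, fun x₁ x₂ h1 h2 => ?_⟩
  have ht := (hs_main h1 h2).tsum_eq
  rw [ht]
  have : (1 / π ^ 2) * (π^2 * |x₁ - x₂| / 2) = 1/2 * |x₁ - x₂| := by
    field_simp
  rw [this]
  exact ⟨le_refl _, le_refl _⟩
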